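/- Let g : ℝ → ℝ be a 2π-periodic nonnegative C¹ function and let σ ∈ [0,1] with g' ∈ C^σ. Then for every ζ ∈ ℝ, |g'(ζ)| ≤ 2 ‖g'‖_{C^σ}^{1/(1+σ)} · g(ζ)^{σ/(1+σ)}, where ‖g'‖_{C^σ} denotes the σ-Hölder norm of g'. -/

import Mathlib

open Set Filter Topology

private lemma stmt9_key (g g' : ℝ → ℝ) (σ M ζ : ℝ) (hσ0 : 0 < σ) (hM : 0 < M)
    (hnonneg : ∀ ζ, 0 ≤ g ζ)
    (hderiv : ∀ ζ, HasDerivAt g (g' ζ) ζ)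
    (hHolder : ∀ x y : ℝ, |g' x - g' y| ≤ M * |x - y| ^ σ)
    (hpos : 0 < g' ζ) :
    g' ζ / 2 * (g' ζ / (2 * M)) ^ (1/σ) ≤ g ζ := by
  set A := g' ζ with hA
  set h := (A / (2 * M)) ^ (1/σ) with hh
  have hA2M : 0 < A / (2*M) := by positivity
  have hhpos : 0 < h := Real.rpow_pos_of_pos hA2M _
  have hhσ : h ^ σ = A / (2*M) := by
    rw [hh, ← Real.rpow_mul hA2M.le, one_div, inv_mul_cancel₀ hσ0.ne', Real.rpow_one]
  have hab : ζ - h < ζ := by linarith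
  obtain ⟨c, hc, hceq⟩ := exists_hasDerivAt_eq_slope g g' hab
    (fun x _ => (hderiv x).continuousAt.continuousWithinAt)
    (fun x _ => hderiv x)
  have hcd : |c - ζ| ≤ h := by
    rw [abs_le]; constructor <;> [linarith [hc.1]; linarith [hc.2]]
  have hgc : A / 2 ≤ g' c := by
    have h1 : |g' c - g' ζ| ≤ M * |c - ζ| ^ σ := hHolder c ζ
    have h2 : |c - ζ| ^ σ ≤ h ^ σ :=
      Real.rpow_le_rpow (abs_nonneg _) hcd hσ0.le
    have h3 : M * h ^ σ = A / 2 := by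
      rw [hhσ]; field_simp
    have := abs_le.1 h1
    nlinarith [this.1, this.2]
  have hslope : g ζ - g (ζ - h) = g' c * h := by
    have e : ζ - (ζ - h) = h := by ring
    rw [e] at hceq
    field_simp at hceq
    linarith
  nlinarith [hnonneg (ζ - h), hgc, hhpos]

private lemma stmt9_alg (A M gz σ : ℝ) (hA : 0 < A) (hM : 0 < M) (hσ0 : 0 < σ)
    (hg : 0 ≤ gz)
    (hkey : A / 2 * (A / (2*M)) ^ (1/σ) ≤ gz) :
    A ≤ 2 * M ^ (1/(1+σ)) * gz ^ (σ/(1+σ)) := by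
  have h1σ : (0:ℝ) < 1 + σ := by linarith
  have hstep : (A/2) ^ ((1+σ)/σ) ≤ gz * M ^ (1/σ) := by
    have e1 : A / (2*M) = (A/2) * M⁻¹ := by field_simp
    have e2 : ((A/2) * M⁻¹) ^ (1/σ) = (A/2)^(1/σ) * (M^(1/σ))⁻¹ := by
      rw [Real.mul_rpow (by positivity) (by positivity), Real.inv_rpow hM.le]
    have e3 : (A/2) ^ ((1+σ)/σ) = (A/2) * (A/2)^(1/σ) := by
      rw [← Real.rpow_one_add' (by positivity) (by positivity), add_div,
        div_self hσ0.ne']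
      ring_nf
    rw [e3]
    rw [e1, e2] at hkey
    have hMσ : 0 < M ^ (1/σ) := Real.rpow_pos_of_pos hM _
    calc A/2 * (A/2)^(1/σ) = (A/2 * ((A/2)^(1/σ) * (M^(1/σ))⁻¹)) * M^(1/σ) := by
          field_simp
      _ ≤ gz * M^(1/σ) := by
          apply mul_le_mul_of_nonneg_right hkey hMσ.le
  have hfin := Real.rpow_le_rpow (by positivity) hstep (by positivity : (0:ℝ) ≤ σ/(1+σ))
  have eL : ((A/2) ^ ((1+σ)/σ)) ^ (σ/(1+σ)) = A/2 := by
    rw [← Real.rpow_mul (by positivity)]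
    have : (1+σ)/σ * (σ/(1+σ)) = 1 := by field_simp
    rw [this, Real.rpow_one]
  have eR : (gz * M ^ (1/σ)) ^ (σ/(1+σ)) = gz^(σ/(1+σ)) * M^(1/(1+σ)) := by
    rw [Real.mul_rpow hg (by positivity), ← Real.rpow_mul hM.le]
    have : 1/σ * (σ/(1+σ)) = 1/(1+σ) := by field_simp
    rw [this]
  rw [eL, eR] at hfin
  linarith

theorem stmt9 (g g' : ℝ → ℝ) (σ M : ℝ) (hσ : σ ∈ Set.Icc (0:ℝ) 1) (hM : 0 ≤ M)
    (hper : Function.Periodic g (2 * Real.pi))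
    (hnonneg : ∀ ζ, 0 ≤ g ζ)
    (hderiv : ∀ ζ, HasDerivAt g (g' ζ) ζ)
    (hbound : ∀ ζ, |g' ζ| ≤ M)
    (hHolder : ∀ x y : ℝ, |g' x - g' y| ≤ M * |x - y| ^ σ) :
    ∀ ζ, |g' ζ| ≤ 2 * M ^ (1 / (1 + σ)) * g ζ ^ (σ / (1 + σ)) := by
  intro ζ
  rcases eq_or_lt_of_le hσ.1 with hσ0 | hσ0
  · -- σ = 0
    rw [← hσ0]
    norm_num [Real.rpow_zero, Real.rpow_one]
    linarith [hbound ζ, abs_nonneg (g' ζ)]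
  · rcases lt_trichotomy (g' ζ) 0 with hneg | hzero | hpos
    · have hMpos : 0 < M := lt_of_lt_of_le (abs_pos.2 hneg.ne) (hbound ζ)
      -- reflect
      set G : ℝ → ℝ := fun x => g (2*ζ - x) with hG
      set G' : ℝ → ℝ := fun x => -g' (2*ζ - x) with hG'
      have hGd : ∀ x, HasDerivAt G (G' x) x := by
        intro x
        have hu : HasDerivAt (fun y => 2*ζ - y) (-1) x := by
          simpa using (hasDerivAt_id x).const_sub (2*ζ)
        have := (hderiv (2*ζ - x)).comp x hu
        simpa [hG, hG', Function.comp, Function.comp_def, mul_comm] using this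
      have hGH : ∀ x y : ℝ, |G' x - G' y| ≤ M * |x - y| ^ σ := by
        intro x y
        have := hHolder (2*ζ - x) (2*ζ - y)
        have e1 : (2*ζ - x) - (2*ζ - y) = y - x := by ring
        rw [e1, abs_sub_comm y x] at this
        calc |G' x - G' y| = |g' (2*ζ - x) - g' (2*ζ - y)| := by
              simp [hG']; rw [abs_sub_comm]; ring_nf
          _ ≤ M * |x - y| ^ σ := this
      have e : 2*ζ - ζ = ζ := by ring
      have hkey := stmt9_key G G' σ M ζ hσ0 hMpos (fun x => hnonneg _) hGd hGH
        (by show (0:ℝ) < -g' (2*ζ - ζ); rw [e]; linarith)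
      have eG : G ζ = g ζ := by show g (2*ζ - ζ) = g ζ; rw [e]
      have eG' : G' ζ = |g' ζ| := by
        show -g' (2*ζ - ζ) = |g' ζ|; rw [e, abs_of_neg hneg]
      rw [eG, eG'] at hkey
      exact stmt9_alg _ M (g ζ) σ (abs_pos.2 hneg.ne) hMpos hσ0 (hnonneg ζ) hkey
    · rw [hzero]
      simp only [abs_zero]
      have h1 := Real.rpow_nonneg hM (1/(1+σ))
      have h2 := Real.rpow_nonneg (hnonneg ζ) (σ/(1+σ))
      positivity
    · have hMpos : 0 < M := lt_of_lt_of_le (abs_pos.2 hpos.ne') (hbound ζ)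
      have hkey := stmt9_key g g' σ M ζ hσ0 hMpos hnonneg hderiv hHolder hpos
      rw [abs_of_pos hpos]
      exact stmt9_alg _ M (g ζ) σ hpos hMpos hσ0 (hnonneg ζ) hkey
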